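/- There exists a probability space, a decreasing sequence of σ-algebras (F_n)_{n≥1}, and a random variable X with E(e^{|X|}) < ∞ (so X belongs to the Orlicz space L_ψ with ψ(x) = e^{|x|} − 1) such that E(X | F_n) → 0 almost surely, yet the Orlicz norm ‖E(X | F_n)‖_ψ ≥ 1 for all n; i.e., the backward martingale convergence theorem fails in the Orlicz space L_ψ. -/

import Mathlib

open MeasureTheory Filter Finset
open scoped ENNReal Topology

/-- The Orlicz (Luxemburg) norm associated with the Young function
`ψ(x) = e^{|x|} - 1`: `‖f‖_ψ = inf {c > 0 : E e^{|f|/c} ≤ 2}`. -/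
noncomputable def expOrliczNorm {Ω : Type*} [MeasurableSpace Ω] (μ : Measure Ω)
    (f : Ω → ℝ) : ℝ :=
  sInf {c : ℝ | 0 < c ∧ ∫⁻ ω, ENNReal.ofReal (Real.exp (|f ω| / c)) ∂μ ≤ 2}

noncomputable section BMF

namespace BMF

/-- weight on naturals -/
def q (k : ℕ) : ℝ := Real.exp (-(k:ℝ)) / (k+1)^2

lemma q_pos (k : ℕ) : 0 < q k := by
  apply div_pos (Real.exp_pos _)
  positivity

lemma q_le (k : ℕ) : q k ≤ Real.exp (-1) ^ k := by
  have h : Real.exp (-1) ^ k = Real.exp (-(k:ℝ)) := by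
    rw [← Real.exp_nat_mul]; ring_nf
  rw [h]
  exact div_le_self (Real.exp_pos _).le (by nlinarith [Nat.cast_nonneg (α := ℝ) k])

lemma summable_q_nat : Summable q :=
  Summable.of_nonneg_of_le (fun k => (q_pos k).le) q_le
    (summable_geometric_of_lt_one (Real.exp_pos _).le
      (Real.exp_lt_one_iff.mpr (by norm_num)))

lemma summable_q_int : Summable (fun z : ℤ => q z.natAbs) := by
  apply Summable.of_nat_of_neg
  · simpa using summable_q_nat
  · simpa using summable_q_nat

/-- normalization constant -/
def T : ℝ := ∑' z : ℤ, q z.natAbs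

lemma T_pos : 0 < T := Summable.tsum_pos summable_q_int (fun z => (q_pos _).le) 0 (q_pos 0)

/-- point masses -/
def p (z : ℤ) : ℝ≥0∞ := ENNReal.ofReal (q z.natAbs / T)

lemma p_pos (z : ℤ) : 0 < p z := by
  unfold p
  rw [ENNReal.ofReal_pos]
  exact div_pos (q_pos _) T_pos

lemma p_neg (z : ℤ) : p (-z) = p z := by simp [p]

/-- the measure -/
def μ' : Measure ℤ := Measure.sum fun z => p z • Measure.dirac z

lemma mu_apply (s : Set ℤ) : μ' s = ∑' z, p z * s.indicator 1 z := by
  rw [μ', Measure.sum_apply _ (MeasurableSet.of_discrete)]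
  congr 1
  ext z
  rw [Measure.smul_apply, Measure.dirac_apply, smul_eq_mul]

lemma mu_singleton (a : ℤ) : μ' {a} = p a := by
  rw [mu_apply]
  rw [tsum_eq_single a]
  · simp
  · intro b hb
    simp [Set.indicator, hb]

lemma lintegral_mu (f : ℤ → ℝ≥0∞) : ∫⁻ z, f z ∂μ' = ∑' z, p z * f z := by
  rw [μ', lintegral_sum_measure]
  congr 1
  ext z
  rw [lintegral_smul_measure, lintegral_dirac, smul_eq_mul]

lemma sum_p : ∑' z, p z = 1 := by
  unfold p
  rw [← ENNReal.ofReal_tsum_of_nonneg (fun z => div_nonneg (q_pos _).le T_pos.le)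
    (summable_q_int.div_const T)]
  rw [tsum_div_const]
  show ENNReal.ofReal (T / T) = 1
  rw [div_self T_pos.ne', ENNReal.ofReal_one]

instance : IsProbabilityMeasure μ' := by
  constructor
  rw [mu_apply]
  simp only [Set.indicator_univ, Pi.one_apply, mul_one]
  exact sum_p

/-- the random variable -/
def Xf (z : ℤ) : ℝ := z

lemma abs_Xf (z : ℤ) : |Xf z| = (z.natAbs : ℝ) := by
  simp [Xf, Nat.cast_natAbs]

lemma summable_inv_sq_nat : Summable (fun n : ℕ => ((n : ℝ) + 1)⁻¹ ^ 2) := by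
  have h0 : Summable (fun n : ℕ => (((n : ℝ)) ^ 2)⁻¹) :=
    Real.summable_nat_pow_inv.mpr one_lt_two
  have h := (summable_nat_add_iff (f := fun n : ℕ => (((n : ℝ)) ^ 2)⁻¹) 1).mpr h0
  apply h.congr
  intro n
  push_cast
  rw [inv_pow]

lemma summable_inv_sq : Summable (fun z : ℤ => ((z.natAbs : ℝ) + 1)⁻¹ ^ 2) := by
  apply Summable.of_nat_of_neg <;>
  · apply summable_inv_sq_nat.congr
    intro n
    simp

lemma lintegral_exp_abs : ∫⁻ z, ENNReal.ofReal (Real.exp |Xf z|) ∂μ' < ⊤ := by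
  rw [lintegral_mu]
  have heq : ∀ z : ℤ, p z * ENNReal.ofReal (Real.exp |Xf z|)
      = ENNReal.ofReal ((((z.natAbs : ℝ) + 1)⁻¹ ^ 2) / T) := by
    intro z
    rw [p, abs_Xf, ← ENNReal.ofReal_mul (div_nonneg (q_pos _).le T_pos.le)]
    congr 1
    have hq : q z.natAbs * Real.exp (z.natAbs : ℝ) = ((z.natAbs : ℝ) + 1)⁻¹ ^ 2 := by
      rw [q, div_mul_eq_mul_div, ← Real.exp_add, neg_add_cancel, Real.exp_zero, inv_pow, one_div]
    rw [div_mul_eq_mul_div, hq]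
  calc ∑' z, p z * ENNReal.ofReal (Real.exp |Xf z|)
      = ∑' z : ℤ, ENNReal.ofReal ((((z.natAbs : ℝ) + 1)⁻¹ ^ 2) / T) := by
        exact tsum_congr heq
    _ = ENNReal.ofReal (∑' z : ℤ, (((z.natAbs : ℝ) + 1)⁻¹ ^ 2) / T) := by
        rw [ENNReal.ofReal_tsum_of_nonneg]
        · exact fun z => div_nonneg (by positivity) T_pos.le
        · exact summable_inv_sq.div_const T
    _ < ⊤ := ENNReal.ofReal_lt_top

lemma integrable_Xf : Integrable Xf μ' := by
  refine ⟨Measurable.of_discrete.aestronglyMeasurable, ?_⟩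
  rw [hasFiniteIntegral_iff_norm]
  apply lt_of_le_of_lt _ lintegral_exp_abs
  apply lintegral_mono
  intro z
  apply ENNReal.ofReal_le_ofReal
  rw [Real.norm_eq_abs]
  have := Real.add_one_le_exp (|Xf z|)
  linarith [abs_nonneg (Xf z)]

/-- symmetry of the measure -/
lemma mu_map_neg : μ'.map (fun z => -z) = μ' := by
  ext s hs
  rw [Measure.map_apply Measurable.of_discrete hs, mu_apply, mu_apply]
  rw [← (Equiv.neg ℤ).tsum_eq]
  apply tsum_congr
  intro z
  simp only [Equiv.neg_apply, p_neg]
  congr 1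
  have h : -z ∈ (fun w : ℤ => -w) ⁻¹' s ↔ z ∈ s := by simp
  by_cases hz : z ∈ s
  · rw [Set.indicator_of_mem (h.mpr hz), Set.indicator_of_mem hz]; rfl
  · rw [Set.indicator_of_notMem (fun c => hz (h.mp c)), Set.indicator_of_notMem hz]

lemma integral_symm_zero {s : Set ℤ} (hsym : ∀ z, z ∈ s → -z ∈ s) :
    ∫ z in s, Xf z ∂μ' = 0 := by
  have hneg : (fun z : ℤ => -z) ⁻¹' s = s := by
    ext z
    constructor
    · intro h; simpa using hsym _ h
    · intro h; exact hsym _ h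
  have key : ∫ z in s, Xf z ∂μ' = ∫ z in s, Xf (-z) ∂μ' := by
    conv_lhs => rw [← mu_map_neg]
    rw [setIntegral_map MeasurableSet.of_discrete
      Measurable.of_discrete.aestronglyMeasurable Measurable.of_discrete.aemeasurable, hneg]
  have h2 : ∫ z in s, Xf (-z) ∂μ' = - ∫ z in s, Xf z ∂μ' := by
    rw [← integral_neg]
    apply integral_congr_ae
    filter_upwards with z
    simp [Xf]
  rw [h2] at key
  linarith

/-- projection collapsing the block -/
def pr (n : ℕ) (z : ℤ) : ℤ := if z.natAbs < n then 0 else z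

/-- the filtration -/
def Fn (n : ℕ) : MeasurableSpace ℤ := MeasurableSpace.comap (pr n) ⊤

lemma Fn_le (n : ℕ) : Fn n ≤ (inferInstance : MeasurableSpace ℤ) := le_top

lemma Fn_mono (n : ℕ) : Fn (n + 1) ≤ Fn n := by
  have hcomp : pr (n + 1) = pr (n + 1) ∘ pr n := by
    funext z
    by_cases h : z.natAbs < n
    · simp only [Function.comp_apply, pr, if_pos h, if_pos (Nat.lt_succ_of_lt h)]
      simp
    · simp only [Function.comp_apply, pr, if_neg h]
  rw [Fn, hcomp, ← MeasurableSpace.comap_comp]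
  exact MeasurableSpace.comap_mono le_top

lemma pr_mem (n : ℕ) (t : Set ℤ) : MeasurableSet[Fn n] (pr n ⁻¹' t) :=
  ⟨t, MeasurableSpace.measurableSet_top, rfl⟩

lemma tail_singleton_mem {n : ℕ} {z : ℤ} (hz : n ≤ z.natAbs) :
    MeasurableSet[Fn n] {z} := by
  have : pr n ⁻¹' {z} = {z} := by
    ext w
    simp only [Set.mem_preimage, Set.mem_singleton_iff, pr]
    by_cases h : w.natAbs < n
    · rw [if_pos h]
      constructor
      · intro h0
        exfalso
        rw [← h0] at hz
        simp at hz
        omega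
      · intro h0
        rw [h0] at h
        omega
    · rw [if_neg h]
  rw [← this]
  exact pr_mem n {z}

lemma block_mem (n : ℕ) : MeasurableSet[Fn n] {z : ℤ | z.natAbs < n} := by
  rcases Nat.eq_zero_or_pos n with hn | hn
  · subst hn
    have : {z : ℤ | z.natAbs < 0} = ∅ := by ext z; simp
    rw [this]
    exact @MeasurableSet.empty _ (Fn 0)
  · have : pr n ⁻¹' {0} = {z : ℤ | z.natAbs < n} := by
      ext w
      simp only [Set.mem_preimage, Set.mem_singleton_iff, Set.mem_setOf_eq, pr]
      by_cases h : w.natAbs < n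
      · rw [if_pos h]; simpa using h
      · rw [if_neg h]
        constructor
        · intro h0; subst h0; omega
        · intro h0; omega
    rw [← this]
    exact pr_mem n {0}

lemma p_ne_top (z : ℤ) : p z ≠ ⊤ := ENNReal.ofReal_ne_top

lemma mu_singleton_toReal_pos (z : ℤ) : 0 < (μ' {z}).toReal := by
  rw [mu_singleton]
  exact ENNReal.toReal_pos (p_pos z).ne' (p_ne_top z)

lemma condexp_tail {n : ℕ} {z : ℤ} (hz : n ≤ z.natAbs) :
    (μ'[Xf | Fn n]) z = Xf z := by
  have h := setIntegral_condExp (Fn_le n) integrable_Xf (tail_singleton_mem hz)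
  rw [integral_singleton, integral_singleton] at h
  have hpos := mu_singleton_toReal_pos z
  rw [smul_eq_mul, smul_eq_mul] at h
  exact mul_left_cancel₀ hpos.ne' h

lemma condexp_block {n : ℕ} {z : ℤ} (hz : z.natAbs < n) :
    (μ'[Xf | Fn n]) z = 0 := by
  set g := μ'[Xf | Fn n] with hg
  have hmeas : StronglyMeasurable[Fn n] g := stronglyMeasurable_condExp
  -- g is constant on the block
  have hconst : ∀ w : ℤ, w.natAbs < n → g w = g z := by
    intro w hw
    have hs : MeasurableSet[Fn n] (g ⁻¹' {g z}) :=
      hmeas.measurable (measurableSet_singleton _)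
    obtain ⟨t, -, ht⟩ := hs
    have hzt : z ∈ pr n ⁻¹' t := by rw [ht]; exact rfl
    have : pr n w ∈ t := by
      have h1 : pr n z = 0 := by rw [pr, if_pos hz]
      have h2 : pr n w = 0 := by rw [pr, if_pos hw]
      rw [h2, ← h1]
      exact hzt
    have : w ∈ g ⁻¹' {g z} := by rw [← ht]; exact this
    exact this
  have hint := setIntegral_condExp (Fn_le n) integrable_Xf (block_mem n)
  have hrhs : ∫ w in {z : ℤ | z.natAbs < n}, Xf w ∂μ' = 0 := by
    apply integral_symm_zero
    intro w hw
    simpa using hw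
  have hlhs : ∫ w in {z : ℤ | z.natAbs < n}, g w ∂μ'
      = (μ' {z : ℤ | z.natAbs < n}).toReal • g z := by
    have h1 : ∫ w in {z : ℤ | z.natAbs < n}, g w ∂μ'
        = ∫ _ in {z : ℤ | z.natAbs < n}, g z ∂μ' :=
      setIntegral_congr_fun MeasurableSet.of_discrete (fun w hw => hconst w hw)
    rw [h1, setIntegral_const]; rfl
  rw [hlhs, hrhs] at hint
  have hμpos : 0 < (μ' {z : ℤ | z.natAbs < n}).toReal := by
    apply ENNReal.toReal_pos
    · intro hc
      have h0 : (0:ℤ) ∈ {z : ℤ | z.natAbs < n} := by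
        simp only [Set.mem_setOf_eq, Int.natAbs_zero]
        omega
      have := measure_mono (μ := μ') (Set.singleton_subset_iff.mpr h0)
      rw [mu_singleton, hc] at this
      exact (p_pos 0).ne' (le_antisymm this zero_le)
    · exact ((measure_mono (μ := μ') (Set.subset_univ _)).trans_lt
        (by rw [measure_univ]; exact ENNReal.one_lt_top)).ne
  rw [smul_eq_mul] at hint
  rcases mul_eq_zero.mp hint with h | h
  · exact absurd h hμpos.ne'
  · exact h

lemma condexp_abs_le (n : ℕ) (z : ℤ) : |(μ'[Xf | Fn n]) z| ≤ |Xf z| := by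
  by_cases h : z.natAbs < n
  · rw [condexp_block h]
    simp [abs_nonneg]
  · rw [condexp_tail (not_lt.mp h)]

lemma key_ineq {c : ℝ} (hc0 : 0 < c) (hc1 : c < 1) :
    ∃ K : ℕ, ∀ k : ℕ, K ≤ k → 1 ≤ q k * Real.exp (k / c) := by
  set a := 1 / c - 1 with ha_def
  have ha : 0 < a := by
    have : 1 < 1 / c := (one_lt_div hc0).mpr hc1
    simp only [ha_def]
    linarith
  have hlo := (isLittleO_pow_exp_pos_mul_atTop 2 ha).def
    (by norm_num : (0:ℝ) < 1/4)
  rw [eventually_atTop] at hlo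
  obtain ⟨M, hM⟩ := hlo
  obtain ⟨K₀, hK₀⟩ := exists_nat_ge M
  refine ⟨max K₀ 1, fun k hk => ?_⟩
  have hk1 : 1 ≤ k := le_trans (le_max_right _ _) hk
  have hkM : M ≤ (k : ℝ) := by
    calc M ≤ (K₀ : ℝ) := hK₀
      _ ≤ (k : ℝ) := by exact_mod_cast le_trans (le_max_left _ _) hk
  have h1 := hM k hkM
  rw [Real.norm_eq_abs, Real.norm_eq_abs, abs_of_nonneg (by positivity),
    abs_of_nonneg (Real.exp_pos _).le] at h1
  -- h1 : (k:ℝ)^2 ≤ 1/4 * exp (a * k)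
  have hq : q k * Real.exp (k / c) = Real.exp (a * (k:ℝ)) / ((k:ℝ) + 1) ^ 2 := by
    rw [q, div_mul_eq_mul_div, ← Real.exp_add]
    congr 2
    field_simp [ha_def]
    rw [ha_def, mul_sub, mul_one_div_cancel hc0.ne', mul_one]; ring
  rw [hq, le_div_iff₀ (by positivity)]
  have hksq : ((k:ℝ) + 1) ^ 2 ≤ 4 * (k:ℝ) ^ 2 := by
    have : (1:ℝ) ≤ (k:ℝ) := by exact_mod_cast hk1
    nlinarith
  nlinarith

lemma lintegral_condexp_top {n : ℕ} {c : ℝ} (hc0 : 0 < c) (hc1 : c < 1) :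
    ∫⁻ z, ENNReal.ofReal (Real.exp (|(μ'[Xf | Fn n]) z| / c)) ∂μ' = ⊤ := by
  obtain ⟨K₀, hK₀⟩ := key_ineq hc0 hc1
  set K := max K₀ n with hK_def
  have hTinv : ENNReal.ofReal (1 / T) ≠ 0 := by
    rw [ne_eq, ENNReal.ofReal_eq_zero, not_le]
    exact div_pos one_pos T_pos
  rw [lintegral_mu]
  refine top_le_iff.mp ?_
  have hinj : Function.Injective (fun m : ℕ => ((K + m : ℕ) : ℤ)) := by
    intro a b h
    simpa using h
  calc (⊤ : ℝ≥0∞) = ∑' _ : ℕ, ENNReal.ofReal (1 / T) :=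
        (ENNReal.tsum_const_eq_top_of_ne_zero hTinv).symm
    _ ≤ ∑' m : ℕ, (fun z : ℤ =>
          p z * ENNReal.ofReal (Real.exp (|(μ'[Xf | Fn n]) z| / c)))
          (((K + m : ℕ) : ℤ)) := by
        apply ENNReal.tsum_le_tsum
        intro m
        simp only
        have hna : ((K + m : ℕ) : ℤ).natAbs = K + m := Int.natAbs_natCast _
        have htail : (μ'[Xf | Fn n]) (((K + m : ℕ) : ℤ)) = Xf (((K + m : ℕ) : ℤ)) := by
          apply condexp_tail
          rw [hna]
          exact le_trans (le_max_right _ _) (Nat.le_add_right _ _)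
        rw [htail, abs_Xf, hna, p, hna,
          ← ENNReal.ofReal_mul (div_nonneg (q_pos _).le T_pos.le)]
        apply ENNReal.ofReal_le_ofReal
        rw [div_mul_eq_mul_div]
        have h1 : 1 ≤ q (K + m) * Real.exp ((K + m : ℕ) / c) :=
          hK₀ _ (le_trans (le_max_left _ _) (Nat.le_add_right _ _))
        rw [div_le_div_iff₀ T_pos T_pos]
        nlinarith [T_pos]
    _ ≤ ∑' z : ℤ, p z * ENNReal.ofReal (Real.exp (|(μ'[Xf | Fn n]) z| / c)) :=
        ENNReal.tsum_comp_le_tsum_of_injective hinj _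

lemma exists_good_c (n : ℕ) :
    ∃ c : ℝ, 0 < c ∧
      ∫⁻ z, ENNReal.ofReal (Real.exp (|(μ'[Xf | Fn n]) z| / c)) ∂μ' ≤ 2 := by
  set g := μ'[Xf | Fn n] with hg
  set A₀ := ∫⁻ z, ENNReal.ofReal (Real.exp |Xf z|) ∂μ' with hA₀_def
  have hA₀_top : A₀ ≠ ⊤ := lintegral_exp_abs.ne
  set c := A₀.toReal + 1 with hc_def
  have hc1 : 1 ≤ c := by
    have := ENNReal.toReal_nonneg (a := A₀)
    linarith
  have hc0 : 0 < c := by linarith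
  set t := 1 / c with ht_def
  have ht0 : 0 < t := by positivity
  have ht1 : t ≤ 1 := by
    rw [ht_def, div_le_one hc0]
    linarith
  refine ⟨c, hc0, ?_⟩
  have hpt : ∀ z : ℤ, Real.exp (|g z| / c) ≤ (1 - t) + t * Real.exp |g z| := by
    intro z
    have hx := convexOn_exp.2 (Set.mem_univ (|g z|)) (Set.mem_univ (0:ℝ))
      ht0.le (sub_nonneg.mpr ht1) (by ring)
    simp only [smul_eq_mul, mul_zero, add_zero, Real.exp_zero, mul_one] at hx
    have heq : t * |g z| = |g z| / c := by
      rw [ht_def]; ring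
    rw [heq] at hx
    linarith
  have hAle : ∫⁻ z, ENNReal.ofReal (Real.exp |g z|) ∂μ' ≤ A₀ := by
    rw [hA₀_def]
    apply lintegral_mono
    intro z
    exact ENNReal.ofReal_le_ofReal (Real.exp_le_exp.mpr (condexp_abs_le n z))
  calc ∫⁻ z, ENNReal.ofReal (Real.exp (|g z| / c)) ∂μ'
      ≤ ∫⁻ z, (ENNReal.ofReal (1 - t) + ENNReal.ofReal t * ENNReal.ofReal (Real.exp |g z|)) ∂μ' := by
        apply lintegral_mono
        intro z
        calc ENNReal.ofReal (Real.exp (|g z| / c))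
            ≤ ENNReal.ofReal ((1 - t) + t * Real.exp |g z|) :=
              ENNReal.ofReal_le_ofReal (hpt z)
          _ = ENNReal.ofReal (1 - t) + ENNReal.ofReal (t * Real.exp |g z|) :=
              ENNReal.ofReal_add (by linarith) (by positivity)
          _ = ENNReal.ofReal (1 - t) + ENNReal.ofReal t * ENNReal.ofReal (Real.exp |g z|) := by
              rw [ENNReal.ofReal_mul ht0.le]
    _ = ENNReal.ofReal (1 - t) + ENNReal.ofReal t * ∫⁻ z, ENNReal.ofReal (Real.exp |g z|) ∂μ' := by
        rw [lintegral_add_left measurable_const, lintegral_const, measure_univ, mul_one,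
          lintegral_const_mul _ Measurable.of_discrete]
    _ ≤ 1 + ENNReal.ofReal t * A₀ :=
        add_le_add (ENNReal.ofReal_le_one.mpr (by linarith))
          (mul_le_mul_right hAle _)
    _ ≤ 1 + 1 := by
        gcongr
        rw [← ENNReal.ofReal_toReal hA₀_top, ← ENNReal.ofReal_mul ht0.le]
        apply ENNReal.ofReal_le_one.mpr
        rw [ht_def, div_mul_eq_mul_div, one_mul, div_le_one hc0]
        linarith
    _ = 2 := one_add_one_eq_two

end BMF

end BMF

/-- The backward martingale convergence theorem fails in the Orlicz space
`L_ψ` with `ψ(x) = e^{|x|} - 1`: there is a probability space, a decreasing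
sequence of σ-algebras `(F_n)` and `X` with `E e^{|X|} < ∞` such that
`E(X|F_n) → 0` a.s. but `‖E(X|F_n)‖_ψ ≥ 1` for all `n`. -/
theorem backward_martingale_fails_in_orlicz :
    ∃ (Ω : Type) (m0 : MeasurableSpace Ω) (μ : Measure Ω)
      (_ : IsProbabilityMeasure μ) (F : ℕ → MeasurableSpace Ω) (X : Ω → ℝ),
      (∀ n, F (n + 1) ≤ F n) ∧ (∀ n, F n ≤ m0) ∧
      Integrable X μ ∧
      (∫⁻ ω, ENNReal.ofReal (Real.exp |X ω|) ∂μ) < ⊤ ∧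
      (∀ᵐ ω ∂μ, Tendsto (fun n => (μ[X | F n]) ω) atTop (𝓝 0)) ∧
      (∀ n, 1 ≤ expOrliczNorm μ (μ[X | F n])) := by
  refine ⟨ℤ, inferInstance, BMF.μ', inferInstance, BMF.Fn, BMF.Xf,
    BMF.Fn_mono, BMF.Fn_le, BMF.integrable_Xf, BMF.lintegral_exp_abs, ?_, ?_⟩
  · apply ae_of_all
    intro z
    have hev : ∀ᶠ n in atTop, (BMF.μ'[BMF.Xf | BMF.Fn n]) z = 0 :=
      eventually_atTop.mpr ⟨z.natAbs + 1, fun n hn => BMF.condexp_block (by omega)⟩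
    exact Tendsto.congr' (hev.mono fun n h => h.symm) tendsto_const_nhds
  · intro n
    rw [expOrliczNorm]
    obtain ⟨c, hc0, hc2⟩ := BMF.exists_good_c n
    apply le_csInf ⟨c, Set.mem_setOf_eq ▸ And.intro hc0 hc2⟩
    rintro b ⟨hb0, hb2⟩
    by_contra hb1
    push_neg at hb1
    rw [BMF.lintegral_condexp_top hb0 hb1] at hb2
    exact absurd hb2 (by simp)
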